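/- Suppose a qubit channel Γ satisfies S(Γ(ρ(x,y,z))) = S(Γ(ρ(x,−y,z))) for all (x,y,z) in the Bloch ball, and Γ maps the reflection ρ(x,y,z) ↦ ρ(x,−y,z) covariantly (i.e., reflecting all inputs across the x-z plane leaves the Holevo quantity of any ensemble unchanged). Let ρ₁, ρ₂ lie in the x-z plane (y=0) and ρ₃ = ρ(x₃,y₃,z₃) with y₃ ≠ 0, with probabilities π₁, π₂, π₃, and set ρ₄ = ρ(x₃,−y₃,z₃). If S(Γ(·)) is strictly concave, then the 4-point ensemble {(π₁,ρ₁),(π₂,ρ₂),(π₃/2,ρ₃),(π₃/2,ρ₄)} has strictly larger Holevo quantity than the 3-point ensemble {(π₁,ρ₁),(π₂,ρ₂),(π₃,ρ₃)}. -/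

import Mathlib

open Matrix Kronecker BigOperators
open scoped ComplexOrder

noncomputable def matLog2 {n : Type*} [Fintype n] [DecidableEq n] (A : Matrix n n ℂ) :
    Matrix n n ℂ :=
  if hA : A.IsHermitian then
    (hA.eigenvectorUnitary : Matrix n n ℂ) *
      Matrix.diagonal (fun i => (Real.logb 2 (hA.eigenvalues i) : ℂ)) *
      (star (hA.eigenvectorUnitary : Matrix n n ℂ))
  else 0

/-- von Neumann entropy (base 2): `S(A) = -Tr (A log₂ A)`. -/
noncomputable def vnEntropy {n : Type*} [Fintype n] [DecidableEq n] (A : Matrix n n ℂ) : ℝ :=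
  -((A * matLog2 A).trace).re

/-- Quantum relative entropy `H(ω,σ) = Tr ω (log₂ ω - log₂ σ)`. -/
noncomputable def relEnt {n : Type*} [Fintype n] [DecidableEq n] (ω σ : Matrix n n ℂ) : ℝ :=
  ((ω * (matLog2 ω - matLog2 σ)).trace).re

def IsDensityMatrix {n : Type*} [Fintype n] [DecidableEq n] (A : Matrix n n ℂ) : Prop :=
  A.PosSemidef ∧ A.trace = 1

/-- Holevo capacity: sup of `S(Γ(ρ̄)) - ∑ pᵢ S(Γ(ρᵢ))` over finite ensembles. -/
noncomputable def holevoCap {n : Type*} [Fintype n] [DecidableEq n]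
    (Γ : Matrix n n ℂ → Matrix n n ℂ) : ℝ :=
  sSup {c : ℝ | ∃ (m : ℕ) (p : Fin m → ℝ) (ρ : Fin m → Matrix n n ℂ),
    (∀ i, 0 ≤ p i) ∧ (∑ i, p i = 1) ∧ (∀ i, IsDensityMatrix (ρ i)) ∧
    c = vnEntropy (Γ (∑ i, p i • ρ i)) - ∑ i, p i * vnEntropy (Γ (ρ i))}

noncomputable def pauliX : Matrix (Fin 2) (Fin 2) ℂ := !![0, 1; 1, 0]
noncomputable def pauliY : Matrix (Fin 2) (Fin 2) ℂ := !![0, -Complex.I; Complex.I, 0]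
noncomputable def pauliZ : Matrix (Fin 2) (Fin 2) ℂ := !![1, 0; 0, -1]

/-- The Bloch representation `ρ(x,y,z) = ½(I + xσₓ + yσ_y + zσ_z)`. -/
noncomputable def blochMat (x y z : ℝ) : Matrix (Fin 2) (Fin 2) ℂ :=
  (1/2 : ℂ) • ((1 : Matrix (Fin 2) (Fin 2) ℂ) + (x : ℂ) • pauliX + (y : ℂ) • pauliY
    + (z : ℂ) • pauliZ)

/-- The (linear extension of the) qubit map acting on Bloch coordinates by
`(x,y,z) ↦ (λ₁x + t₁, λ₂y + t₂, λ₃z + t₃)`. -/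
noncomputable def qubitChan (l₁ l₂ l₃ t₁ t₂ t₃ : ℝ) (M : Matrix (Fin 2) (Fin 2) ℂ) :
    Matrix (Fin 2) (Fin 2) ℂ :=
  (1/2 : ℂ) • (M.trace • (1 : Matrix (Fin 2) (Fin 2) ℂ)
    + ((l₁ : ℂ) * (M * pauliX).trace + (t₁ : ℂ) * M.trace) • pauliX
    + ((l₂ : ℂ) * (M * pauliY).trace + (t₂ : ℂ) * M.trace) • pauliY
    + ((l₃ : ℂ) * (M * pauliZ).trace + (t₃ : ℂ) * M.trace) • pauliZ)

/-- The tensor product `Γ₁ ⊗ Γ₂` of two maps on matrices, acting on the Kronecker-product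
space, determined by `(Γ₁ ⊗ Γ₂)(A ⊗ₖ B) = Γ₁(A) ⊗ₖ Γ₂(B)` for linear `Γ₁, Γ₂`. -/
noncomputable def tensorMap {m n : Type*} [Fintype m] [DecidableEq m] [Fintype n] [DecidableEq n]
    (Γ₁ : Matrix m m ℂ → Matrix m m ℂ) (Γ₂ : Matrix n n ℂ → Matrix n n ℂ)
    (M : Matrix (m × n) (m × n) ℂ) : Matrix (m × n) (m × n) ℂ :=
  ∑ j : m, ∑ l : m,
    (Γ₁ (Matrix.single j l 1)) ⊗ₖ (Γ₂ (Matrix.of fun a b => M (j, a) (l, b)))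

/-- Partial trace over the first tensor factor. -/
noncomputable def ptrace1 {m n : Type*} [Fintype m] (X : Matrix (m × n) (m × n) ℂ) :
    Matrix n n ℂ :=
  Matrix.of fun i k => ∑ a : m, X (a, i) (a, k)

/-- Partial trace over the second tensor factor. -/
noncomputable def ptrace2 {m n : Type*} [Fintype n] (X : Matrix (m × n) (m × n) ℂ) :
    Matrix m m ℂ :=
  Matrix.of fun i k => ∑ a : n, X (i, a) (k, a)


section Aux

lemma cs_aux (x y z s t p q : ℝ) (h : x^2+y^2+z^2 ≤ 1) (hpq : p^2+q^2 = s*t)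
    (hs : 0 ≤ s) (ht : 0 ≤ t) : 0 ≤ s + t + z*(s-t) + 2*x*p + 2*y*q := by
  have hL : (z*(s-t)+2*x*p+2*y*q)^2 ≤ (x^2+y^2+z^2) * ((s-t)^2 + 4*p^2 + 4*q^2) := by
    nlinarith [sq_nonneg (x*(s-t)-2*z*p), sq_nonneg (y*(s-t)-2*z*q), sq_nonneg (2*x*q-2*y*p)]
  have he : (s-t)^2 + 4*p^2 + 4*q^2 = (s+t)^2 := by nlinarith [hpq]
  rw [he] at hL
  have h2 : (z*(s-t)+2*x*p+2*y*q)^2 ≤ (s+t)^2 := by nlinarith [sq_nonneg (s+t)]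
  nlinarith [h2, add_nonneg hs ht]

lemma quadpos (x y z ar ai br bi : ℝ) (h : x^2+y^2+z^2 ≤ 1) :
    0 ≤ ar*x*br + ar*y*bi + ar^2*(1/2) + ar^2*z*(1/2) + z*br^2*(-1/2) + z*bi^2*(-1/2)
      + z*ai^2*(1/2) + (x*bi*ai - br*y*ai) + br^2*(1/2) + bi^2*(1/2) + ai^2*(1/2) := by
  have := cs_aux x y z (ar^2+ai^2) (br^2+bi^2) (ar*br+ai*bi) (ar*bi-ai*br) h (by ring)
    (by positivity) (by positivity)
  linarith [this]

lemma psd_real_smul {c : ℝ} (hc : 0 ≤ c) {A : Matrix (Fin 2) (Fin 2) ℂ} (h : A.PosSemidef) :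
    (c • A).PosSemidef := by
  have hca : c • A = (c : ℂ) • A := rfl
  refine Matrix.PosSemidef.of_dotProduct_mulVec_nonneg ?_ fun v => ?_
  · unfold Matrix.IsHermitian
    rw [hca, Matrix.conjTranspose_smul, h.1.eq]
    simp [Complex.ext_iff]
  · rw [hca, Matrix.smul_mulVec, dotProduct_smul, smul_eq_mul]
    exact mul_nonneg (by exact_mod_cast hc) (h.dotProduct_mulVec_nonneg v)

lemma bloch_psd {x y z : ℝ} (h : x ^ 2 + y ^ 2 + z ^ 2 ≤ 1) : (blochMat x y z).PosSemidef := by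
  refine Matrix.PosSemidef.of_dotProduct_mulVec_nonneg ?_ ?_
  · unfold Matrix.IsHermitian
    ext i j
    fin_cases i <;> fin_cases j <;>
      simp [blochMat, pauliX, pauliY, pauliZ, Matrix.conjTranspose_apply, Matrix.one_apply,
        Complex.ext_iff] <;> ring
  · intro v
    rw [Complex.le_def]
    constructor
    · simp only [blochMat, pauliX, pauliY, pauliZ, Matrix.mulVec, dotProduct,
        Fin.sum_univ_two, Matrix.smul_apply, Matrix.add_apply, Matrix.one_apply,
        Matrix.cons_val', Matrix.cons_val_zero, Matrix.cons_val_one, Matrix.head_cons,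
        Matrix.head_fin_const, Matrix.empty_val', Matrix.cons_val_fin_one]
      have := quadpos x y z (v 0).re (v 0).im (v 1).re (v 1).im h
      simp only [Complex.add_re, Complex.mul_re, Complex.mul_im, Complex.zero_re, Complex.zero_im]
      push_cast
      simp [Complex.ext_iff]
      ring_nf
      ring_nf at this
      linarith [this]
    · simp [blochMat, pauliX, pauliY, pauliZ, Matrix.mulVec, dotProduct,
        Fin.sum_univ_two, Matrix.one_apply]
      ring_nf

lemma bloch_density {x y z : ℝ} (h : x ^ 2 + y ^ 2 + z ^ 2 ≤ 1) :
    IsDensityMatrix (blochMat x y z) := by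
  refine ⟨bloch_psd h, ?_⟩
  simp [blochMat, pauliX, pauliY, pauliZ, Matrix.trace, Matrix.diag, Fin.sum_univ_two]
  ring

lemma combo_density {π₁ π₂ π₃ : ℝ} (h₁ : 0 ≤ π₁) (h₂ : 0 ≤ π₂) (h₃ : 0 ≤ π₃)
    (hs : π₁ + π₂ + π₃ = 1) {A B C : Matrix (Fin 2) (Fin 2) ℂ}
    (hA : IsDensityMatrix A) (hB : IsDensityMatrix B) (hC : IsDensityMatrix C) :
    IsDensityMatrix (π₁ • A + π₂ • B + π₃ • C) := by
  refine ⟨((psd_real_smul h₁ hA.1).add (psd_real_smul h₂ hB.1)).add (psd_real_smul h₃ hC.1), ?_⟩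
  simp [Matrix.trace_add, Matrix.trace_smul, hA.2, hB.2, hC.2]
  exact_mod_cast congrArg (fun r : ℝ => (r : ℂ)) hs

end Aux

/-- For a channel with reflection symmetry across the x-z plane (equal output entropies for
reflected inputs, and Holevo quantity invariant under reflecting every input), if `ρ₁, ρ₂`
lie in the x-z plane and `ρ₃` has `y₃ ≠ 0`, and `S∘Γ` is strictly concave, then splitting
`ρ₃` into the reflected pair `ρ₃, ρ₄` with halved probabilities strictly increases the
Holevo quantity. -/
theorem splitting_reflected_pair_increases_holevo
    (Γ : Matrix (Fin 2) (Fin 2) ℂ → Matrix (Fin 2) (Fin 2) ℂ)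
    (hmap : ∀ ρ, IsDensityMatrix ρ → IsDensityMatrix (Γ ρ))
    (hsym : ∀ x y z : ℝ, x ^ 2 + y ^ 2 + z ^ 2 ≤ 1 →
      vnEntropy (Γ (blochMat x y z)) = vnEntropy (Γ (blochMat x (-y) z)))
    (hcov : ∀ (n : ℕ) (p : Fin n → ℝ) (v : Fin n → ℝ × ℝ × ℝ),
      (∀ i, 0 ≤ p i) → (∑ i, p i = 1) →
      (∀ i, (v i).1 ^ 2 + (v i).2.1 ^ 2 + (v i).2.2 ^ 2 ≤ 1) →
      vnEntropy (Γ (∑ i, p i • blochMat (v i).1 (-(v i).2.1) (v i).2.2)) -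
          ∑ i, p i * vnEntropy (Γ (blochMat (v i).1 (-(v i).2.1) (v i).2.2)) =
        vnEntropy (Γ (∑ i, p i • blochMat (v i).1 ((v i).2.1) (v i).2.2)) -
          ∑ i, p i * vnEntropy (Γ (blochMat (v i).1 ((v i).2.1) (v i).2.2)))
    (hstrict : StrictConcaveOn ℝ {ρ : Matrix (Fin 2) (Fin 2) ℂ | IsDensityMatrix ρ}
      (fun ρ => vnEntropy (Γ ρ)))
    (x₁ z₁ x₂ z₂ x₃ y₃ z₃ π₁ π₂ π₃ : ℝ)
    (h₁ : x₁ ^ 2 + z₁ ^ 2 ≤ 1) (h₂ : x₂ ^ 2 + z₂ ^ 2 ≤ 1)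
    (h₃ : x₃ ^ 2 + y₃ ^ 2 + z₃ ^ 2 ≤ 1) (hy₃ : y₃ ≠ 0)
    (hπ₁ : 0 < π₁) (hπ₂ : 0 < π₂) (hπ₃ : 0 < π₃) (hπ : π₁ + π₂ + π₃ = 1) :
    vnEntropy (Γ (π₁ • blochMat x₁ 0 z₁ + π₂ • blochMat x₂ 0 z₂ + π₃ • blochMat x₃ y₃ z₃)) -
        (π₁ * vnEntropy (Γ (blochMat x₁ 0 z₁)) + π₂ * vnEntropy (Γ (blochMat x₂ 0 z₂)) +
          π₃ * vnEntropy (Γ (blochMat x₃ y₃ z₃))) <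
      vnEntropy (Γ (π₁ • blochMat x₁ 0 z₁ + π₂ • blochMat x₂ 0 z₂ +
          (π₃ / 2) • blochMat x₃ y₃ z₃ + (π₃ / 2) • blochMat x₃ (-y₃) z₃)) -
        (π₁ * vnEntropy (Γ (blochMat x₁ 0 z₁)) + π₂ * vnEntropy (Γ (blochMat x₂ 0 z₂)) +
          (π₃ / 2) * vnEntropy (Γ (blochMat x₃ y₃ z₃)) +
          (π₃ / 2) * vnEntropy (Γ (blochMat x₃ (-y₃) z₃))) := by
  have hb1 : IsDensityMatrix (blochMat x₁ 0 z₁) := bloch_density (by nlinarith)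
  have hb2 : IsDensityMatrix (blochMat x₂ 0 z₂) := bloch_density (by nlinarith)
  have hb3 : IsDensityMatrix (blochMat x₃ y₃ z₃) := bloch_density h₃
  have h₄ : x₃ ^ 2 + (-y₃) ^ 2 + z₃ ^ 2 ≤ 1 := by nlinarith
  have hb4 : IsDensityMatrix (blochMat x₃ (-y₃) z₃) := bloch_density h₄
  have hA : IsDensityMatrix (π₁ • blochMat x₁ 0 z₁ + π₂ • blochMat x₂ 0 z₂ +
      π₃ • blochMat x₃ y₃ z₃) := combo_density hπ₁.le hπ₂.le hπ₃.le hπ hb1 hb2 hb3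
  have hB : IsDensityMatrix (π₁ • blochMat x₁ 0 z₁ + π₂ • blochMat x₂ 0 z₂ +
      π₃ • blochMat x₃ (-y₃) z₃) := combo_density hπ₁.le hπ₂.le hπ₃.le hπ hb1 hb2 hb4
  have hsym3 := hsym x₃ y₃ z₃ h₃
  have hcov3 := hcov 3 ![π₁, π₂, π₃] ![(x₁, 0, z₁), (x₂, 0, z₂), (x₃, y₃, z₃)]
    (by intro i; fin_cases i <;> simp <;> linarith)
    (by simp [Fin.sum_univ_three]; linarith)
    (by intro i; fin_cases i <;> simp <;> nlinarith)
  simp only [Fin.sum_univ_three, Matrix.cons_val_zero, Matrix.cons_val_one, Matrix.head_cons,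
    Matrix.cons_val_two, Matrix.tail_cons, neg_zero] at hcov3
  have hSB : vnEntropy (Γ (π₁ • blochMat x₁ 0 z₁ + π₂ • blochMat x₂ 0 z₂ +
      π₃ • blochMat x₃ (-y₃) z₃)) = vnEntropy (Γ (π₁ • blochMat x₁ 0 z₁ +
      π₂ • blochMat x₂ 0 z₂ + π₃ • blochMat x₃ y₃ z₃)) := by
    have hmul : π₃ * vnEntropy (Γ (blochMat x₃ y₃ z₃)) =
        π₃ * vnEntropy (Γ (blochMat x₃ (-y₃) z₃)) := by rw [hsym3]
    linarith
  have hne : (π₁ • blochMat x₁ 0 z₁ + π₂ • blochMat x₂ 0 z₂ + π₃ • blochMat x₃ y₃ z₃) ≠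
      (π₁ • blochMat x₁ 0 z₁ + π₂ • blochMat x₂ 0 z₂ + π₃ • blochMat x₃ (-y₃) z₃) := by
    intro hAB
    apply hy₃
    have h01 := congrArg (fun M => (M 0 1).im) hAB
    simp only [blochMat, pauliX, pauliY, pauliZ, Matrix.add_apply, Matrix.smul_apply,
      Matrix.one_apply] at h01
    norm_num [Complex.ext_iff] at h01
    have hz : π₃ * y₃ = 0 := by linarith
    rcases mul_eq_zero.mp hz with h | h
    · exact absurd h hπ₃.ne'
    · exact h
  have hmid := hstrict.2 (Set.mem_setOf.mpr hA) (Set.mem_setOf.mpr hB) hne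
    (by norm_num : (0:ℝ) < 1/2) (by norm_num : (0:ℝ) < 1/2) (by norm_num)
  simp only [smul_eq_mul] at hmid
  have hC : (1/2 : ℝ) • (π₁ • blochMat x₁ 0 z₁ + π₂ • blochMat x₂ 0 z₂ +
        π₃ • blochMat x₃ y₃ z₃) + (1/2 : ℝ) • (π₁ • blochMat x₁ 0 z₁ +
        π₂ • blochMat x₂ 0 z₂ + π₃ • blochMat x₃ (-y₃) z₃) =
      π₁ • blochMat x₁ 0 z₁ + π₂ • blochMat x₂ 0 z₂ + (π₃ / 2) • blochMat x₃ y₃ z₃ +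
        (π₃ / 2) • blochMat x₃ (-y₃) z₃ := by module
  rw [← hC]
  have hS4 : vnEntropy (Γ (blochMat x₃ (-y₃) z₃)) = vnEntropy (Γ (blochMat x₃ y₃ z₃)) := by
    linarith [hsym x₃ y₃ z₃ h₃]
  linarith [hmid, hSB, hS4]
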